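/- arXiv:1003.3175 — 7 statements merged into one kernel-verified Lean document; each statement's English description precedes it below -/
import Mathlib

section
/- Let Q be a set with binary operations · , \ and / such that for all x, y in Q: x·(x\y) = y, (y/x)·x = y, x\(x·y) = y, and x/(y\x) = y. Then all six quasigroup identities hold in Q; in particular, (y·x)/x = y for all x, y in Q (so (Q, ·, \, /) is an equational quasigroup). -/
/-- An algebra (Q, ·, \, /) satisfying the given identities satisfies all six
Birkhoff quasigroup identities (A), (C), (B), (D), (T), (R), i.e. it is an
equational quasigroup. -/
theorem quasigroup_of_ACBT {Q : Type*} (mul ld rd : Q → Q → Q)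
    (hA : ∀ x y, mul x (ld x y) = y)
    (hC : ∀ x y, mul (rd y x) x = y)
    (hB : ∀ x y, ld x (mul x y) = y)
    (hT : ∀ x y, rd x (ld y x) = y) :
    (∀ x y, mul x (ld x y) = y) ∧ (∀ x y, mul (rd y x) x = y) ∧
    (∀ x y, ld x (mul x y) = y) ∧ (∀ x y, rd (mul y x) x = y) ∧
    (∀ x y, rd x (ld y x) = y) ∧ (∀ x y, ld (rd x y) x = y) := by
  refine ⟨hA, hC, hB, ?_, hT, ?_⟩
  · intro x y
    have := hT (mul y x) y
    rwa [hB] at this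
  · intro x y
    have h : mul (rd x y) (ld (rd x y) x) = mul (rd x y) y := by
      rw [hA, hC]
    have := congrArg (ld (rd x y)) h
    rwa [hB (rd x y) (ld (rd x y) x), hB] at this
end

section
/- Let Q be a set with binary operations · , \ and / such that for all x, y in Q: (y/x)·x = y, x\(x·y) = y, (y·x)/x = y, and x/(y\x) = y. Then all six quasigroup identities hold in Q; in particular, x·(x\y) = y for all x, y in Q (so (Q, ·, \, /) is an equational quasigroup). -/
/-- An algebra (Q, ·, \, /) satisfying the given identities satisfies all six
Birkhoff quasigroup identities (A), (C), (B), (D), (T), (R), i.e. it is an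
equational quasigroup. -/
theorem quasigroup_of_CBDT {Q : Type*} (mul ld rd : Q → Q → Q)
    (hC : ∀ x y, mul (rd y x) x = y)
    (hB : ∀ x y, ld x (mul x y) = y)
    (hD : ∀ x y, rd (mul y x) x = y)
    (hT : ∀ x y, rd x (ld y x) = y) :
    (∀ x y, mul x (ld x y) = y) ∧ (∀ x y, mul (rd y x) x = y) ∧
    (∀ x y, ld x (mul x y) = y) ∧ (∀ x y, rd (mul y x) x = y) ∧
    (∀ x y, rd x (ld y x) = y) ∧ (∀ x y, ld (rd x y) x = y) := by
  refine ⟨fun x y => ?_, hC, hB, hD, hT, fun x y => ?_⟩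
  · have h := hC (ld x y) y
    rwa [hT y x] at h
  · have h := hB (rd x y) y
    rwa [hC y x] at h
end

section
/- Let Q be a set with binary operations · , \ and / such that for all x, y in Q: x·(x\y) = y, (y/x)·x = y, (y·x)/x = y, and (x/y)\x = y. Then all six quasigroup identities hold in Q; in particular, x\(x·y) = y for all x, y in Q (so (Q, ·, \, /) is an equational quasigroup). -/
/-- An algebra (Q, ·, \, /) satisfying the given identities satisfies all six
Birkhoff quasigroup identities (A), (C), (B), (D), (T), (R), i.e. it is an
equational quasigroup. -/
theorem quasigroup_of_ACDR {Q : Type*} (mul ld rd : Q → Q → Q)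
    (hA : ∀ x y, mul x (ld x y) = y)
    (hC : ∀ x y, mul (rd y x) x = y)
    (hD : ∀ x y, rd (mul y x) x = y)
    (hR : ∀ x y, ld (rd x y) x = y) :
    (∀ x y, mul x (ld x y) = y) ∧ (∀ x y, mul (rd y x) x = y) ∧
    (∀ x y, ld x (mul x y) = y) ∧ (∀ x y, rd (mul y x) x = y) ∧
    (∀ x y, rd x (ld y x) = y) ∧ (∀ x y, ld (rd x y) x = y) := by
  refine ⟨hA, hC, ?_, hD, ?_, hR⟩
  · intro x y
    nth_rewrite 1 [show x = rd (mul x y) y from (hD y x).symm]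
    exact hR (mul x y) y
  · intro x y
    nth_rewrite 1 [show x = mul y (ld y x) from (hA y x).symm]
    exact hD (ld y x) y
end

section
/- Let Q be a set with binary operations · , \ and / such that for all x, y in Q: x·(x\y) = y, x\(x·y) = y, (y·x)/x = y, and (x/y)\x = y. Then all six quasigroup identities hold in Q; in particular, (y/x)·x = y for all x, y in Q (so (Q, ·, \, /) is an equational quasigroup). -/
/-- An algebra (Q, ·, \, /) satisfying the given identities satisfies all six
Birkhoff quasigroup identities (A), (C), (B), (D), (T), (R), i.e. it is an
equational quasigroup. -/
theorem quasigroup_of_ABDR {Q : Type*} (mul ld rd : Q → Q → Q)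
    (hA : ∀ x y, mul x (ld x y) = y)
    (hB : ∀ x y, ld x (mul x y) = y)
    (hD : ∀ x y, rd (mul y x) x = y)
    (hR : ∀ x y, ld (rd x y) x = y) :
    (∀ x y, mul x (ld x y) = y) ∧ (∀ x y, mul (rd y x) x = y) ∧
    (∀ x y, ld x (mul x y) = y) ∧ (∀ x y, rd (mul y x) x = y) ∧
    (∀ x y, rd x (ld y x) = y) ∧ (∀ x y, ld (rd x y) x = y) := by
  refine ⟨hA, fun x y => ?_, hB, hD, fun x y => ?_, hR⟩
  · calc mul (rd y x) x = mul (rd y x) (ld (rd y x) y) := by rw [hR]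
      _ = y := hA _ _
  · have := hD (ld y x) y
    rwa [hA] at this
end

section
/- Let Q be a set with binary operations · , \ and / such that for all x, y in Q: x·(x\y) = y, (y·x)/x = y, x/(y\x) = y, and (x/y)\x = y. Then all six quasigroup identities hold in Q; in particular, (y/x)·x = y and x\(x·y) = y for all x, y in Q (so (Q, ·, \, /) is an equational quasigroup). -/
/-- An algebra (Q, ·, \, /) satisfying the given identities satisfies all six
Birkhoff quasigroup identities (A), (C), (B), (D), (T), (R), i.e. it is an
equational quasigroup. -/
theorem quasigroup_of_ADTR {Q : Type*} (mul ld rd : Q → Q → Q)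
    (hA : ∀ x y, mul x (ld x y) = y)
    (hD : ∀ x y, rd (mul y x) x = y)
    (hT : ∀ x y, rd x (ld y x) = y)
    (hR : ∀ x y, ld (rd x y) x = y) :
    (∀ x y, mul x (ld x y) = y) ∧ (∀ x y, mul (rd y x) x = y) ∧
    (∀ x y, ld x (mul x y) = y) ∧ (∀ x y, rd (mul y x) x = y) ∧
    (∀ x y, rd x (ld y x) = y) ∧ (∀ x y, ld (rd x y) x = y) := by
  refine ⟨hA, fun x y => ?_, fun x y => ?_, hD, hT, hR⟩
  · have h := hR y x
    calc mul (rd y x) x = mul (rd y x) (ld (rd y x) y) := by rw [h]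
    _ = y := hA _ _
  · have h := hD y x
    calc ld x (mul x y) = ld (rd (mul x y) y) (mul x y) := by rw [h]
    _ = y := hR _ _
end

section
/- Let Q be a set with binary operations · , \ and / such that for all x, y in Q: (y/x)·x = y, x\(x·y) = y, x/(y\x) = y, and (x/y)\x = y. Then all six quasigroup identities hold in Q; in particular, x·(x\y) = y and (y·x)/x = y for all x, y in Q (so (Q, ·, \, /) is an equational quasigroup). -/
/-- An algebra (Q, ·, \, /) satisfying the given identities satisfies all six
Birkhoff quasigroup identities (A), (C), (B), (D), (T), (R), i.e. it is an
equational quasigroup. -/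
theorem quasigroup_of_CBTR {Q : Type*} (mul ld rd : Q → Q → Q)
    (hC : ∀ x y, mul (rd y x) x = y)
    (hB : ∀ x y, ld x (mul x y) = y)
    (hT : ∀ x y, rd x (ld y x) = y)
    (hR : ∀ x y, ld (rd x y) x = y) :
    (∀ x y, mul x (ld x y) = y) ∧ (∀ x y, mul (rd y x) x = y) ∧
    (∀ x y, ld x (mul x y) = y) ∧ (∀ x y, rd (mul y x) x = y) ∧
    (∀ x y, rd x (ld y x) = y) ∧ (∀ x y, ld (rd x y) x = y) := by
  refine ⟨fun x y => ?_, hC, hB, fun x y => ?_, hT, hR⟩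
  · have h := hT y x
    calc mul x (ld x y) = mul (rd y (ld x y)) (ld x y) := by rw [h]
    _ = y := hC _ _
  · have h := hB y x
    calc rd (mul y x) x = rd (mul y x) (ld y (mul y x)) := by rw [h]
    _ = y := hT _ _
end

section
/- Let Q be a set with binary operations · , \ and / such that for all x, y in Q: (y/x)·x = y, (y·x)/x = y, x/(y\x) = y, and (x/y)\x = y. Then all six quasigroup identities hold in Q; in particular, x·(x\y) = y and x\(x·y) = y for all x, y in Q (so (Q, ·, \, /) is an equational quasigroup). -/
/-- An algebra (Q, ·, \, /) satisfying the given identities satisfies all six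
Birkhoff quasigroup identities (A), (C), (B), (D), (T), (R), i.e. it is an
equational quasigroup. -/
theorem quasigroup_of_CDTR {Q : Type*} (mul ld rd : Q → Q → Q)
    (hC : ∀ x y, mul (rd y x) x = y)
    (hD : ∀ x y, rd (mul y x) x = y)
    (hT : ∀ x y, rd x (ld y x) = y)
    (hR : ∀ x y, ld (rd x y) x = y) :
    (∀ x y, mul x (ld x y) = y) ∧ (∀ x y, mul (rd y x) x = y) ∧
    (∀ x y, ld x (mul x y) = y) ∧ (∀ x y, rd (mul y x) x = y) ∧
    (∀ x y, rd x (ld y x) = y) ∧ (∀ x y, ld (rd x y) x = y) := by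
  refine ⟨fun x y => ?_, hC, fun x y => ?_, hD, hT, hR⟩
  · have h := hC (ld x y) y
    rwa [hT y x] at h
  · have h := hR (mul x y) y
    rwa [hD y x] at h
end
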